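/- Let n, h be positive naturals and ℓ a positive real. Let (a_i)_{i=1}^{m} be a sequence of nonnegative reals with m = ⌈log₂ h⌉ · ⌈ℓ⌉ terms, and let T_j = Σ_{i ≥ j} a_i + B for each j (where B ≥ 0 is a fixed 'remainder'). Suppose B > n/h, T_1 ≤ n, and ℓ ≥ 1. Then there exists an index i* with 1 ≤ i* ≤ m such that a_{i*} ≤ T_{i*+1}/ℓ. -/
import Mathlib


theorem stmt_2 (n h : ℕ) (hn : 0 < n) (hh : 0 < h) (ℓ : ℝ) (hℓ : 1 ≤ ℓ)
    (m : ℕ) (hm : m = Nat.clog 2 h * ⌈ℓ⌉₊)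
    (a : ℕ → ℝ) (ha : ∀ i, 0 ≤ a i)
    (B : ℝ) (hB : 0 ≤ B)
    (T : ℕ → ℝ) (hT : ∀ j, T j = (∑ i ∈ Finset.Icc j m, a i) + B)
    (hBlarge : B > (n : ℝ) / h) (hT1 : T 1 ≤ (n : ℝ)) :
    ∃ iStar, 1 ≤ iStar ∧ iStar ≤ m ∧ a iStar ≤ T (iStar + 1) / ℓ := by
  by_contra hcon
  push_neg at hcon
  have hℓ0 : (0:ℝ) < ℓ := lt_of_lt_of_le one_pos hℓ
  have hbase : (0:ℝ) < 1 + 1/ℓ := by positivity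
  -- geometric growth
  have key : ∀ k, k ≤ m → (1 + 1/ℓ)^k * B ≤ T (m + 1 - k) := by
    intro k
    induction k with
    | zero =>
      intro _
      simp only [pow_zero, one_mul, Nat.sub_zero, hT]
      have : Finset.Icc (m+1) m = ∅ := by
        rw [Finset.Icc_eq_empty_iff]; omega
      simp [this]
    | succ k ih =>
      intro hk
      have hk' : k ≤ m := Nat.le_of_succ_le hk
      have ihk := ih hk'
      set i := m - k with hi
      have him : i ≤ m := Nat.sub_le _ _
      have hi1 : 1 ≤ i := by omega
      have hidx : m + 1 - (k+1) = i := by omega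
      have hidx2 : m + 1 - k = i + 1 := by omega
      rw [hidx2] at ihk
      rw [hidx]
      have hsplit : T i = a i + T (i+1) := by
        rw [hT i, hT (i+1), Finset.Icc_add_one_left_eq_Ioc,
          ← Finset.Ioc_insert_left him, Finset.sum_insert (by simp)]
        ring
      have hTpos : 0 ≤ T (i+1) := le_trans (by positivity) ihk
      have hai : T (i+1) / ℓ < a i := hcon i hi1 him
      calc (1 + 1/ℓ)^(k+1) * B = (1 + 1/ℓ) * ((1 + 1/ℓ)^k * B) := by ring
        _ ≤ (1 + 1/ℓ) * T (i+1) := mul_le_mul_of_nonneg_left ihk (le_of_lt hbase)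
        _ = T (i+1) / ℓ + T (i+1) := by field_simp; ring
        _ ≤ a i + T (i+1) := by linarith
        _ = T i := hsplit.symm
  have keym := key m le_rfl
  simp only [Nat.add_sub_cancel_left, Nat.add_sub_cancel] at keym
  -- T 1 bound from above: keym : (1+1/ℓ)^m * B ≤ T 1
  -- Bernoulli: 2 ≤ (1+1/ℓ)^⌈ℓ⌉₊
  have h2 : (2:ℝ) ≤ (1 + 1/ℓ)^⌈ℓ⌉₊ := by
    have hb := one_add_mul_le_pow (a := 1/ℓ) (by have := one_div_pos.mpr hℓ0; linarith) ⌈ℓ⌉₊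
    have hc : ℓ ≤ (⌈ℓ⌉₊ : ℝ) := Nat.le_ceil ℓ
    have : (1:ℝ) ≤ (⌈ℓ⌉₊ : ℝ) * (1/ℓ) := by
      rw [mul_one_div, le_div_iff₀ hℓ0]; linarith
    linarith
  have hhle : (h:ℝ) ≤ (1 + 1/ℓ)^m := by
    have h1 : h ≤ 2 ^ Nat.clog 2 h := Nat.le_pow_clog (by norm_num) h
    have h1' : (h:ℝ) ≤ (2:ℝ) ^ Nat.clog 2 h := by exact_mod_cast h1
    calc (h:ℝ) ≤ (2:ℝ) ^ Nat.clog 2 h := h1'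
      _ ≤ ((1 + 1/ℓ)^⌈ℓ⌉₊) ^ Nat.clog 2 h :=
          pow_le_pow_left₀ (by norm_num) h2 _
      _ = (1 + 1/ℓ)^m := by rw [← pow_mul, hm, Nat.mul_comm]
  have hhpos : (0:ℝ) < h := by exact_mod_cast hh
  have hBpos : 0 < B := lt_of_le_of_lt (by positivity) hBlarge
  have : (n:ℝ) < T 1 := by
    calc (n:ℝ) = (h:ℝ) * ((n:ℝ)/h) := by field_simp
      _ < (h:ℝ) * B := by exact mul_lt_mul_of_pos_left hBlarge hhpos
      _ ≤ (1 + 1/ℓ)^m * B := mul_le_mul_of_nonneg_right hhle hB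
      _ ≤ T 1 := keym
  linarith
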